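/- For points p1,…,p5 ∈ ℝ⁴ and a > 0, the trace of A(R,T) satisfies trace(A(R,T)) = (2/(5a²)) · Σ_{1 ≤ i < j ≤ 5} d_{ij}, where d_{ij} = ‖p_j − p_i‖² and the sum runs over all ten squared edge lengths of the pentatope with vertices p1,…,p5. -/

import Mathlib

open Real Matrix Finset

/-- The edge-vector matrix of the regular pentatope with edge length `a`. -/
noncomputable def regularPentatopeMatrix (a : ℝ) : Matrix (Fin 4) (Fin 4) ℝ :=
  !![a * Real.sqrt 3 / 2, a * Real.sqrt 3 / 2, a * Real.sqrt 3 / 3, a * Real.sqrt 3 / 3;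
     -a / 2,              a / 2,               0,                   0;
     0,                   0,                   a * Real.sqrt 6 / 3, a * Real.sqrt 6 / 12;
     0,                   0,                   0,                   a * Real.sqrt 10 / 4]

/-- The edge-vector matrix of the pentatope with vertices `p 0, …, p 4`: the 4×4 matrix
whose columns are `p 1 − p 0, p 2 − p 0, p 3 − p 0, p 4 − p 0`. -/
noncomputable def edgeMatrix (p : Fin 5 → EuclideanSpace ℝ (Fin 4)) :
    Matrix (Fin 4) (Fin 4) ℝ :=
  Matrix.of fun (k : Fin 4) (i : Fin 4) => (p i.succ - p 0) k

/-- `A(R,T) = (R⁻¹)ᵀ · TᵀT · R⁻¹`. -/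
noncomputable def shapeMatrix (a : ℝ) (p : Fin 5 → EuclideanSpace ℝ (Fin 4)) :
    Matrix (Fin 4) (Fin 4) ℝ :=
  ((regularPentatopeMatrix a)⁻¹)ᵀ * ((edgeMatrix p)ᵀ * edgeMatrix p) *
    (regularPentatopeMatrix a)⁻¹

private def auxH0 : Matrix (Fin 4) (Fin 4) ℝ :=
  !![8,-2,-2,-2; -2,8,-2,-2; -2,-2,8,-2; -2,-2,-2,8]

private lemma aux_hG (a : ℝ) : (regularPentatopeMatrix a)ᵀ * regularPentatopeMatrix a
    = a ^ 2 • !![(1:ℝ),1/2,1/2,1/2; 1/2,1,1/2,1/2; 1/2,1/2,1,1/2; 1/2,1/2,1/2,1] := by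
  have h3 : Real.sqrt 3 * Real.sqrt 3 = 3 := Real.mul_self_sqrt (by norm_num)
  have h6 : Real.sqrt 6 * Real.sqrt 6 = 6 := Real.mul_self_sqrt (by norm_num)
  have h10 : Real.sqrt 10 * Real.sqrt 10 = 10 := Real.mul_self_sqrt (by norm_num)
  ext i j
  fin_cases i <;> fin_cases j <;>
    simp [regularPentatopeMatrix, Matrix.mul_apply, Fin.sum_univ_four, Matrix.transpose_apply,
      Matrix.vecHead, Matrix.vecTail, Matrix.cons_val_zero, Matrix.cons_val_one,
      Matrix.cons_val', Matrix.smul_apply, Function.comp] <;>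
    (try ring_nf) <;> norm_num [Real.sq_sqrt] <;> ring

private lemma aux_hG0H0 :
    (!![(1:ℝ),1/2,1/2,1/2; 1/2,1,1/2,1/2; 1/2,1/2,1,1/2; 1/2,1/2,1/2,1] :
      Matrix (Fin 4) (Fin 4) ℝ) * auxH0 = (5:ℝ) • 1 := by
  ext i j
  fin_cases i <;> fin_cases j <;>
    norm_num [auxH0, Matrix.mul_apply, Fin.sum_univ_four, Matrix.one_apply, Matrix.vecHead,
      Matrix.vecTail, Function.comp, Fin.ext_iff, Matrix.cons_val_two, Matrix.cons_val_three]

private lemma aux_hGH (a : ℝ) (ha : a ≠ 0) :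
    ((regularPentatopeMatrix a)ᵀ * regularPentatopeMatrix a) * ((5 * a ^ 2)⁻¹ • auxH0) = 1 := by
  rw [aux_hG, Matrix.mul_smul, Matrix.smul_mul, aux_hG0H0, smul_smul, smul_smul]
  have : (5 * a ^ 2)⁻¹ * a ^ 2 * 5 = 1 := by field_simp
  rw [this, one_smul]

private lemma aux_hRinv (a : ℝ) (ha : a ≠ 0) :
    (regularPentatopeMatrix a)⁻¹ * ((regularPentatopeMatrix a)⁻¹)ᵀ = (5 * a ^ 2)⁻¹ • auxH0 := by
  have hGH := aux_hGH a ha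
  rw [Matrix.transpose_nonsing_inv, ← Matrix.mul_inv_rev, Matrix.inv_eq_right_inv hGH]

private lemma aux_hsum (g : Fin 5 × Fin 5 → ℝ) :
    ∑ ij ∈ Finset.univ.filter (fun ij : Fin 5 × Fin 5 => ij.1 < ij.2), g ij =
      g (0,1) + g (0,2) + g (0,3) + g (0,4) + g (1,2) + g (1,3) + g (1,4)
        + g (2,3) + g (2,4) + g (3,4) := by
  have h : Finset.univ.filter (fun ij : Fin 5 × Fin 5 => ij.1 < ij.2) =
      ({(0,1),(0,2),(0,3),(0,4),(1,2),(1,3),(1,4),(2,3),(2,4),(3,4)} :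
        Finset (Fin 5 × Fin 5)) := by decide
  rw [h]
  repeat rw [Finset.sum_insert (by decide)]
  rw [Finset.sum_singleton]
  ring

set_option maxHeartbeats 1000000 in
/-- `trace(A(R,T)) = (2/(5a²)) · Σ_{1 ≤ i < j ≤ 5} d_{ij}` where `d_{ij} = ‖p_j − p_i‖²`. -/
theorem trace_shapeMatrix (a : ℝ) (ha : 0 < a) (p : Fin 5 → EuclideanSpace ℝ (Fin 4)) :
    (shapeMatrix a p).trace =
      (2 / (5 * a ^ 2)) *
        ∑ ij ∈ Finset.univ.filter (fun ij : Fin 5 × Fin 5 => ij.1 < ij.2),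
          ‖p ij.2 - p ij.1‖ ^ 2 := by
  have ha' : a ≠ 0 := ha.ne'
  have hnorm : ∀ x y : EuclideanSpace ℝ (Fin 4), ‖x - y‖ ^ 2 = ∑ k, (x k - y k) ^ 2 := by
    intro x y
    rw [EuclideanSpace.norm_eq, Real.sq_sqrt (by positivity)]
    simp [sq_abs]
  have h1 : (shapeMatrix a p).trace
      = (((5 * a ^ 2)⁻¹ • auxH0) * ((edgeMatrix p)ᵀ * edgeMatrix p)).trace := by
    rw [shapeMatrix, Matrix.trace_mul_cycle, aux_hRinv a ha']
  have s0 : (0 : Fin 4).succ = 1 := rfl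
  have s1 : (1 : Fin 4).succ = 2 := rfl
  have s2 : (2 : Fin 4).succ = 3 := rfl
  have s3 : (3 : Fin 4).succ = 4 := rfl
  rw [h1, aux_hsum]
  simp only [hnorm, Fin.sum_univ_four, Matrix.trace, Matrix.diag, Matrix.mul_apply,
    Matrix.smul_apply, edgeMatrix, Matrix.transpose_apply, Matrix.of_apply, smul_eq_mul,
    PiLp.sub_apply, s0, s1, s2, s3]
  norm_num [auxH0, Matrix.vecHead, Matrix.vecTail, Matrix.cons_val_two, Matrix.cons_val_three]
  field_simp
  ring
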